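/- If X(β) is a random point in ℝ^d with density f_{d,β}, then √(2β)·X(β) converges in distribution to the standard normal distribution on ℝ^d as β → +∞. -/

import Mathlib

open MeasureTheory Real Filter

private lemma aux_div_tendsto_one (c : ℝ) :
    Tendsto (fun x : ℝ => (x + c) / x) atTop (nhds 1) := by
  have h0 : Tendsto (fun x : ℝ => 1 + c / x) atTop (nhds 1) := by
    have h := Tendsto.div_atTop
      (tendsto_const_nhds : Tendsto (fun _ : ℝ => c) atTop (nhds c)) tendsto_id
    simpa using (tendsto_const_nhds (x := (1:ℝ))).add h
  refine Tendsto.congr' ?_ h0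
  filter_upwards [eventually_ne_atTop (0:ℝ)] with x hx
  rw [add_div, div_self hx]

private lemma aux_wendel_upper {a x : ℝ} (ha0 : 0 ≤ a) (ha1 : a ≤ 1) (hx : 0 < x) :
    Real.Gamma (x + a) ≤ Real.Gamma x * x ^ a := by
  have hx1 : (0:ℝ) < x + 1 := by linarith
  have hxa : (0:ℝ) < x + a := by linarith
  have hg1 : 0 < Real.Gamma x := Real.Gamma_pos_of_pos hx
  have hg2 : 0 < Real.Gamma (x + a) := Real.Gamma_pos_of_pos hxa
  have hg3 : 0 < Real.Gamma (x + 1) := Real.Gamma_pos_of_pos hx1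
  have h := Real.convexOn_log_Gamma.2 (Set.mem_Ioi.2 hx) (Set.mem_Ioi.2 hx1)
    (by linarith : (0:ℝ) ≤ 1 - a) ha0 (by ring)
  have harg : (1 - a) • x + a • (x + 1) = x + a := by
    simp only [smul_eq_mul]; ring
  rw [harg] at h
  simp only [Function.comp_apply, smul_eq_mul] at h
  calc Real.Gamma (x + a) = Real.exp (Real.log (Real.Gamma (x + a))) := (Real.exp_log hg2).symm
    _ ≤ Real.exp ((1 - a) * Real.log (Real.Gamma x) + a * Real.log (Real.Gamma (x + 1))) :=
        Real.exp_le_exp.2 h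
    _ = Real.Gamma x ^ (1 - a) * Real.Gamma (x + 1) ^ a := by
        rw [Real.exp_add, mul_comm (1 - a), mul_comm a, Real.exp_mul, Real.exp_mul,
          Real.exp_log hg1, Real.exp_log hg3]
    _ = Real.Gamma x ^ (1 - a) * (Real.Gamma x ^ a * x ^ a) := by
        rw [Real.Gamma_add_one hx.ne', Real.mul_rpow hx.le hg1.le]; ring
    _ = Real.Gamma x * x ^ a := by
        rw [← mul_assoc, ← Real.rpow_add hg1, sub_add_cancel, Real.rpow_one]

private lemma aux_wendel_lower {a x : ℝ} (ha0 : 0 ≤ a) (ha1 : a ≤ 1) (hx : 0 < x) :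
    Real.Gamma x * x ≤ Real.Gamma (x + a) * (x + a) ^ (1 - a) := by
  have hxa : (0:ℝ) < x + a := by linarith
  have hxa1 : (0:ℝ) < x + a + 1 := by linarith
  have hg1 : 0 < Real.Gamma x := Real.Gamma_pos_of_pos hx
  have hg2 : 0 < Real.Gamma (x + a) := Real.Gamma_pos_of_pos hxa
  have hg3 : 0 < Real.Gamma (x + a + 1) := Real.Gamma_pos_of_pos hxa1
  have h := Real.convexOn_log_Gamma.2 (Set.mem_Ioi.2 hxa) (Set.mem_Ioi.2 hxa1)
    ha0 (by linarith : (0:ℝ) ≤ 1 - a) (by ring)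
  have harg : a • (x + a) + (1 - a) • (x + a + 1) = x + 1 := by
    simp only [smul_eq_mul]; ring
  rw [harg] at h
  simp only [Function.comp_apply, smul_eq_mul] at h
  have key : Real.Gamma (x + 1) ≤ Real.Gamma (x + a) * (x + a) ^ (1 - a) :=
    calc Real.Gamma (x + 1) = Real.exp (Real.log (Real.Gamma (x + 1))) :=
          (Real.exp_log (Real.Gamma_pos_of_pos (by linarith))).symm
      _ ≤ Real.exp (a * Real.log (Real.Gamma (x + a)) + (1 - a) * Real.log (Real.Gamma (x + a + 1))) :=
          Real.exp_le_exp.2 h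
      _ = Real.Gamma (x + a) ^ a * Real.Gamma (x + a + 1) ^ (1 - a) := by
          rw [Real.exp_add, mul_comm a, mul_comm (1 - a), Real.exp_mul, Real.exp_mul,
            Real.exp_log hg2, Real.exp_log hg3]
      _ = Real.Gamma (x + a) ^ a * (Real.Gamma (x + a) ^ (1 - a) * (x + a) ^ (1 - a)) := by
          rw [Real.Gamma_add_one hxa.ne', Real.mul_rpow hxa.le hg2.le]; ring
      _ = Real.Gamma (x + a) * (x + a) ^ (1 - a) := by
          rw [← mul_assoc, ← Real.rpow_add hg2, add_sub_cancel, Real.rpow_one]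
  calc Real.Gamma x * x = Real.Gamma (x + 1) := by
        rw [Real.Gamma_add_one hx.ne']; ring
    _ ≤ Real.Gamma (x + a) * (x + a) ^ (1 - a) := key

private lemma aux_gamma_ratio_base {a : ℝ} (ha0 : 0 ≤ a) (ha1 : a ≤ 1) :
    Tendsto (fun x : ℝ => Real.Gamma (x + a) / (Real.Gamma x * x ^ a)) atTop (nhds 1) := by
  have hlow : Tendsto (fun x : ℝ => (x / (x + a)) ^ (1 - a)) atTop (nhds 1) := by
    have h1 : Tendsto (fun x : ℝ => x / (x + a)) atTop (nhds 1) := by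
      have h := (aux_div_tendsto_one (-a)).comp
        (tendsto_atTop_add_const_right atTop a tendsto_id)
      refine h.congr fun x => ?_
      show (x + a + -a) / (x + a) = x / (x + a)
      ring_nf
    simpa using h1.rpow_const (Or.inl one_ne_zero)
  refine tendsto_of_tendsto_of_tendsto_of_le_of_le' hlow tendsto_const_nhds ?_ ?_
  · filter_upwards [eventually_gt_atTop (0:ℝ)] with x hx
    have hxa : (0:ℝ) < x + a := by linarith
    have hg1 : 0 < Real.Gamma x := Real.Gamma_pos_of_pos hx
    have hpos : 0 < Real.Gamma x * x ^ a := mul_pos hg1 (Real.rpow_pos_of_pos hx a)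
    rw [le_div_iff₀ hpos]
    have hrw : (x / (x + a)) ^ (1 - a) * (Real.Gamma x * x ^ a)
        = Real.Gamma x * x / (x + a) ^ (1 - a) := by
      rw [Real.div_rpow hx.le hxa.le]
      have hxx : x ^ (1 - a) * x ^ a = x := by
        rw [← Real.rpow_add hx, sub_add_cancel, Real.rpow_one]
      field_simp
      exact hxx
    rw [hrw, div_le_iff₀ (Real.rpow_pos_of_pos hxa _)]
    exact aux_wendel_lower ha0 ha1 hx
  · filter_upwards [eventually_gt_atTop (0:ℝ)] with x hx
    have hg1 : 0 < Real.Gamma x := Real.Gamma_pos_of_pos hx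
    have hpos : 0 < Real.Gamma x * x ^ a := mul_pos hg1 (Real.rpow_pos_of_pos hx a)
    rw [div_le_one hpos]
    exact aux_wendel_upper ha0 ha1 hx

private lemma aux_gamma_ratio_gen {a : ℝ} (ha0 : 0 ≤ a) (ha1 : a ≤ 1) :
    ∀ n : ℕ, Tendsto (fun x : ℝ =>
      Real.Gamma (x + (a + n)) / (Real.Gamma x * x ^ (a + n))) atTop (nhds 1) := by
  intro n
  induction n with
  | zero => simpa using aux_gamma_ratio_base ha0 ha1
  | succ n ih =>
    have h2 : Tendsto (fun x : ℝ => (x + (a + n)) / x) atTop (nhds 1) :=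
      aux_div_tendsto_one (a + n)
    have h3 := ih.mul h2
    rw [one_mul] at h3
    refine Tendsto.congr' ?_ h3
    filter_upwards [eventually_gt_atTop (0:ℝ)] with x hx
    have hxan : (0:ℝ) < x + (a + n) := by positivity
    have hG : Real.Gamma (x + (a + (n + 1 : ℕ))) = (x + (a + n)) * Real.Gamma (x + (a + n)) := by
      have : x + (a + (n + 1 : ℕ)) = (x + (a + n)) + 1 := by push_cast; ring
      rw [this, Real.Gamma_add_one hxan.ne']
    have hP : x ^ (a + (n + 1 : ℕ)) = x ^ (a + n) * x := by
      have : a + ((n + 1 : ℕ) : ℝ) = (a + n) + 1 := by push_cast; ring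
      rw [this, Real.rpow_add_one hx.ne']
    have hg1 : 0 < Real.Gamma x := Real.Gamma_pos_of_pos hx
    rw [hG, hP]
    field_simp

private lemma aux_gamma_ratio (d : ℕ) :
    Tendsto (fun x : ℝ =>
      Real.Gamma (x + (d : ℝ) / 2) / (Real.Gamma x * x ^ ((d : ℝ) / 2))) atTop (nhds 1) := by
  rcases Nat.even_or_odd d with ⟨m, hm⟩ | ⟨m, hm⟩
  · have ha : (d : ℝ) / 2 = 0 + (m : ℝ) := by
      subst hm; push_cast; ring
    rw [ha]
    exact aux_gamma_ratio_gen le_rfl zero_le_one m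
  · have ha : (d : ℝ) / 2 = 1 / 2 + (m : ℝ) := by
      subst hm; push_cast; ring
    rw [ha]
    exact aux_gamma_ratio_gen (by norm_num) (by norm_num) m

/-- The limit of the normalizing constants. -/
private lemma aux_const_tendsto (d : ℕ) :
    Tendsto (fun β : ℝ => |((Real.sqrt (2 * β)) ^ d)⁻¹| *
        (Real.Gamma ((d : ℝ) / 2 + β + 1) /
          (Real.pi ^ ((d : ℝ) / 2) * Real.Gamma (β + 1))))
      atTop (nhds ((2 * Real.pi) ^ (-(d : ℝ) / 2))) := by
  set a : ℝ := (d : ℝ) / 2 with ha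
  have haux : Tendsto (fun β : ℝ =>
      Real.Gamma ((β + 1) + a) / (Real.Gamma (β + 1) * (β + 1) ^ a)) atTop (nhds 1) :=
    (aux_gamma_ratio d).comp (tendsto_atTop_add_const_right atTop 1 tendsto_id)
  have hS : Tendsto (fun β : ℝ => ((β + 1) / (2 * β)) ^ a / Real.pi ^ a) atTop
      (nhds ((2 * Real.pi) ^ (-(d : ℝ) / 2))) := by
    have h1 : Tendsto (fun β : ℝ => (β + 1) / (2 * β)) atTop (nhds (1 / 2)) := by
      have h2 := aux_div_tendsto_one 1
      have h3 : Tendsto (fun β : ℝ => ((β + 1) / β) / 2) atTop (nhds (1 / 2)) :=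
        h2.div_const 2
      refine Tendsto.congr' ?_ h3
      filter_upwards [eventually_ne_atTop (0:ℝ)] with β hβ
      rw [div_div, mul_comm]
    have h4 : Tendsto (fun β : ℝ => ((β + 1) / (2 * β)) ^ a) atTop (nhds ((1 / 2 : ℝ) ^ a)) :=
      h1.rpow_const (Or.inl (by norm_num))
    have h5 := h4.div_const (Real.pi ^ a)
    have h6 : (1 / 2 : ℝ) ^ a / Real.pi ^ a = (2 * Real.pi) ^ (-(d : ℝ) / 2) := by
      rw [← Real.div_rpow (by norm_num) Real.pi_pos.le]
      have : (1 / 2 : ℝ) / Real.pi = (2 * Real.pi)⁻¹ := by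
        field_simp
      rw [this, Real.inv_rpow (by positivity), ← Real.rpow_neg (by positivity)]
      rw [ha]
      congr 1
      rw [neg_div]
    rwa [h6] at h5
  have hmain := haux.mul hS
  rw [one_mul] at hmain
  refine Tendsto.congr' ?_ hmain
  filter_upwards [eventually_gt_atTop (0:ℝ)] with β hβ
  have hb1 : (0:ℝ) < β + 1 := by linarith
  have h2b : (0:ℝ) < 2 * β := by linarith
  have hsq : Real.sqrt (2 * β) ^ d = (2 * β) ^ a := by
    rw [Real.sqrt_eq_rpow, ← Real.rpow_natCast ((2 * β) ^ ((1:ℝ)/2)) d,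
      ← Real.rpow_mul h2b.le, ha]
    congr 1
    ring
  have habs : |((Real.sqrt (2 * β)) ^ d)⁻¹| = ((2 * β) ^ a)⁻¹ := by
    rw [hsq, abs_of_pos (inv_pos.2 (Real.rpow_pos_of_pos h2b a))]
  have hGarg : (d : ℝ) / 2 + β + 1 = (β + 1) + a := by rw [ha]; ring
  have hdiv : ((β + 1) / (2 * β)) ^ a = (β + 1) ^ a / (2 * β) ^ a :=
    Real.div_rpow hb1.le h2b.le a
  rw [hGarg, habs, hdiv]
  have hg1 : 0 < Real.Gamma (β + 1) := Real.Gamma_pos_of_pos hb1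
  have hp1 : 0 < (β + 1 : ℝ) ^ a := Real.rpow_pos_of_pos hb1 a
  have hp2 : 0 < (2 * β : ℝ) ^ a := Real.rpow_pos_of_pos h2b a
  have hp3 : 0 < Real.pi ^ a := Real.rpow_pos_of_pos Real.pi_pos a
  field_simp

private lemma aux_integral_withDensity_ofReal {α : Type*} [MeasurableSpace α]
    {ν : Measure α} {f : α → ℝ} (hf : Measurable f) (hf0 : ∀ x, 0 ≤ f x) (g : α → ℝ) :
    ∫ x, g x ∂(ν.withDensity fun x => ENNReal.ofReal (f x)) = ∫ x, f x * g x ∂ν := by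
  rw [show (fun x => ENNReal.ofReal (f x)) = fun x => (((f x).toNNReal : NNReal) : ENNReal) from rfl,
    integral_withDensity_eq_integral_smul hf.real_toNNReal g]
  refine integral_congr_ae (Filter.Eventually.of_forall fun x => ?_)
  simp [NNReal.smul_def, Real.coe_toNNReal _ (hf0 x)]

set_option maxHeartbeats 1000000 in
/-- If `X(β)` has the beta density `f_{d,β}`, then `√(2β) X(β)` converges in distribution
(i.e. weakly, tested against bounded continuous functions) to the standard normal
distribution on `ℝ^d`, as `β → +∞`. -/
theorem beta_rescaled_tendsto_gaussian (d : ℕ) (hd : 1 ≤ d)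
    (μ : ℝ → Measure (EuclideanSpace ℝ (Fin d)))
    (hμ : ∀ β : ℝ, -1 < β → μ β = volume.withDensity (fun x =>
      ENNReal.ofReal (if ‖x‖ < 1 then
        (Real.Gamma ((d : ℝ) / 2 + β + 1) / (Real.pi ^ ((d : ℝ) / 2) * Real.Gamma (β + 1))) *
          (1 - ‖x‖ ^ 2) ^ β
      else 0)))
    (γ : Measure (EuclideanSpace ℝ (Fin d)))
    (hγ : γ = volume.withDensity (fun x =>
      ENNReal.ofReal ((2 * Real.pi) ^ (-(d : ℝ) / 2) * Real.exp (-‖x‖ ^ 2 / 2)))) :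
    ∀ g : BoundedContinuousFunction (EuclideanSpace ℝ (Fin d)) ℝ,
      Tendsto (fun β : ℝ => ∫ x, g x ∂((μ β).map (fun x => Real.sqrt (2 * β) • x)))
        atTop (nhds (∫ x, g x ∂γ)) := by
  classical
  intro g
  set k : ℝ → ℝ := fun β => Real.Gamma ((d : ℝ) / 2 + β + 1) /
    (Real.pi ^ ((d : ℝ) / 2) * Real.Gamma (β + 1)) with hk
  set L : ℝ := (2 * Real.pi) ^ (-(d : ℝ) / 2) with hLdef
  have hLpos : 0 < L := Real.rpow_pos_of_pos (by positivity) _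
  set dens : ℝ → EuclideanSpace ℝ (Fin d) → ℝ :=
    fun β x => if ‖x‖ < 1 then k β * (1 - ‖x‖ ^ 2) ^ β else 0 with hdens
  set F : ℝ → EuclideanSpace ℝ (Fin d) → ℝ := fun β y =>
    |((Real.sqrt (2 * β)) ^ d)⁻¹| *
      (dens β ((Real.sqrt (2 * β))⁻¹ • y) * g y) with hF
  have hκ : Tendsto (fun β : ℝ => |((Real.sqrt (2 * β)) ^ d)⁻¹| * k β) atTop (nhds L) :=
    aux_const_tendsto d
  -- positivity of k
  have hk_pos : ∀ β : ℝ, 0 < β → 0 < k β := by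
    intro β hβ
    have h1 : 0 < Real.Gamma ((d : ℝ) / 2 + β + 1) :=
      Real.Gamma_pos_of_pos (by positivity)
    have h2 : 0 < Real.Gamma (β + 1) := Real.Gamma_pos_of_pos (by linarith)
    have h3 : 0 < Real.pi ^ ((d : ℝ) / 2) := Real.rpow_pos_of_pos Real.pi_pos _
    exact div_pos h1 (mul_pos h3 h2)
  have hdens_nonneg : ∀ β : ℝ, 0 < β → ∀ x : EuclideanSpace ℝ (Fin d), 0 ≤ dens β x := by
    intro β hβ x
    rw [hdens]
    dsimp only
    split
    · exact mul_nonneg (hk_pos β hβ).le (Real.rpow_nonneg (by nlinarith [norm_nonneg x]) β)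
    · exact le_refl _
  have hdens_meas : ∀ β : ℝ, 0 < β → Measurable (dens β) := by
    intro β hβ
    rw [hdens]
    dsimp only
    have hcont : Continuous fun x : EuclideanSpace ℝ (Fin d) => k β * (1 - ‖x‖ ^ 2) ^ β :=
      continuous_const.mul ((continuous_const.sub (continuous_norm.pow 2)).rpow_const
        (fun x => Or.inr hβ.le))
    exact Measurable.ite (measurableSet_lt measurable_norm measurable_const)
      hcont.measurable measurable_const
  have hsqnorm : ∀ β : ℝ, 0 < β → ∀ y : EuclideanSpace ℝ (Fin d),
      ‖(Real.sqrt (2 * β))⁻¹ • y‖ ^ 2 = ‖y‖ ^ 2 / (2 * β) := by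
    intro β hβ y
    have hc : 0 < Real.sqrt (2 * β) := Real.sqrt_pos.2 (by linarith)
    rw [norm_smul, Real.norm_eq_abs, abs_of_pos (inv_pos.2 hc), mul_pow, inv_pow,
      Real.sq_sqrt (by linarith : (0:ℝ) ≤ 2 * β)]
    ring
  -- the right-hand side integral
  have hγint : ∫ x, g x ∂γ = ∫ y : EuclideanSpace ℝ (Fin d), (L * Real.exp (-‖y‖ ^ 2 / 2)) * g y := by
    rw [hγ]
    have hm : Measurable fun x : EuclideanSpace ℝ (Fin d) => L * Real.exp (-‖x‖ ^ 2 / 2) := by fun_prop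
    exact aux_integral_withDensity_ofReal hm (fun x => by positivity) _
  -- rewriting the left-hand side integrals
  have hev : ∀ᶠ β : ℝ in atTop,
      (∫ x, g x ∂((μ β).map fun x => Real.sqrt (2 * β) • x)) = ∫ y, F β y := by
    filter_upwards [eventually_gt_atTop (0:ℝ)] with β hβ
    have hc : 0 < Real.sqrt (2 * β) := Real.sqrt_pos.2 (by linarith)
    have hμ' : μ β = volume.withDensity fun x => ENNReal.ofReal (dens β x) := by
      rw [hμ β (by linarith)]
    rw [hμ',
      integral_map (measurable_const_smul _).aemeasurable g.continuous.aestronglyMeasurable,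
      aux_integral_withDensity_ofReal (hdens_meas β hβ) (hdens_nonneg β hβ) _]
    have hcs := MeasureTheory.Measure.integral_comp_smul volume
      (fun y : EuclideanSpace ℝ (Fin d) => dens β ((Real.sqrt (2 * β))⁻¹ • y) * g y) (Real.sqrt (2 * β))
    simp only [inv_smul_smul₀ hc.ne', finrank_euclideanSpace_fin] at hcs
    rw [hcs, ← integral_smul]
    rfl
  -- integrability of the dominating function
  have hB_int : Integrable
      (fun y : EuclideanSpace ℝ (Fin d) => ((L + 1) * ‖g‖) * Real.exp (-‖y‖ ^ 2 / 2)) volume := by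
    have h := (GaussianFourier.integrable_cexp_neg_mul_sq_norm_add
      (V := EuclideanSpace ℝ (Fin d)) (b := (1/2 : ℂ)) (by norm_num) 0 0).norm
    have h2 : Integrable (fun y : EuclideanSpace ℝ (Fin d) => Real.exp (-‖y‖ ^ 2 / 2)) volume := by
      refine h.congr (Filter.Eventually.of_forall fun y => ?_)
      simp only [Complex.norm_exp]
      congr 1
      simp only [Complex.add_re, Complex.neg_re, Complex.mul_re, Complex.ofReal_re,
        ← Complex.ofReal_pow, Complex.ofReal_im, Complex.zero_re, Complex.zero_im]
      norm_num
      ring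
    exact h2.const_mul _
  -- eventual bound on the constants
  have hM : ∀ᶠ β : ℝ in atTop, |((Real.sqrt (2 * β)) ^ d)⁻¹| * k β ≤ L + 1 :=
    hκ.eventually (eventually_le_nhds (lt_add_one L))
  -- measurability
  have hFmeas : ∀ᶠ β : ℝ in atTop, AEStronglyMeasurable (F β) volume := by
    filter_upwards [eventually_gt_atTop (0:ℝ)] with β hβ
    have hm : Measurable fun y : EuclideanSpace ℝ (Fin d) =>
        dens β ((Real.sqrt (2 * β))⁻¹ • y) * g y :=
      ((hdens_meas β hβ).comp (measurable_const_smul _)).mul g.continuous.measurable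
    rw [hF]
    exact (hm.const_mul _).aestronglyMeasurable
  -- domination
  have hbound : ∀ᶠ β : ℝ in atTop, ∀ᵐ y : EuclideanSpace ℝ (Fin d) ∂volume,
      ‖F β y‖ ≤ ((L + 1) * ‖g‖) * Real.exp (-‖y‖ ^ 2 / 2) := by
    filter_upwards [eventually_gt_atTop (0:ℝ), hM] with β hβ hMβ
    refine Filter.Eventually.of_forall fun y => ?_
    have hc : 0 < Real.sqrt (2 * β) := Real.sqrt_pos.2 (by linarith)
    have habs : (0:ℝ) ≤ |((Real.sqrt (2 * β)) ^ d)⁻¹| := abs_nonneg _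
    have hA : |((Real.sqrt (2 * β)) ^ d)⁻¹| * dens β ((Real.sqrt (2 * β))⁻¹ • y)
        ≤ (L + 1) * Real.exp (-‖y‖ ^ 2 / 2) := by
      have hLexp : (0:ℝ) ≤ (L + 1) * Real.exp (-‖y‖ ^ 2 / 2) :=
        mul_nonneg (by linarith) (Real.exp_nonneg _)
      rw [hdens]
      dsimp only
      split
      case isTrue hlt =>
        have hu2 := hsqnorm β hβ y
        have hu1 : ‖y‖ ^ 2 / (2 * β) < 1 := by
          rw [← hu2]
          exact pow_lt_one₀ (norm_nonneg _) hlt (by norm_num)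
        have hu0 : (0:ℝ) ≤ ‖y‖ ^ 2 / (2 * β) := by positivity
        have h1 : 1 - ‖y‖ ^ 2 / (2 * β) ≤ Real.exp (-(‖y‖ ^ 2 / (2 * β))) := by
          linarith [Real.add_one_le_exp (-(‖y‖ ^ 2 / (2 * β)))]
        have h2 : (1 - ‖y‖ ^ 2 / (2 * β)) ^ β
            ≤ (Real.exp (-(‖y‖ ^ 2 / (2 * β)))) ^ β :=
          Real.rpow_le_rpow (by linarith) h1 hβ.le
        have h3 : (Real.exp (-(‖y‖ ^ 2 / (2 * β)))) ^ β = Real.exp (-‖y‖ ^ 2 / 2) := by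
          rw [← Real.exp_mul]
          congr 1
          field_simp
        rw [hu2]
        calc |((Real.sqrt (2 * β)) ^ d)⁻¹| * (k β * (1 - ‖y‖ ^ 2 / (2 * β)) ^ β)
            = (|((Real.sqrt (2 * β)) ^ d)⁻¹| * k β) * (1 - ‖y‖ ^ 2 / (2 * β)) ^ β := by ring
          _ ≤ (L + 1) * Real.exp (-‖y‖ ^ 2 / 2) :=
              mul_le_mul hMβ (h2.trans h3.le) (Real.rpow_nonneg (by linarith) β)
                (by linarith)
      case isFalse hlt =>
        simpa using hLexp
    have hgy : |g y| ≤ ‖g‖ := by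
      rw [← Real.norm_eq_abs]
      exact g.norm_coe_le_norm y
    have hdnn := hdens_nonneg β hβ ((Real.sqrt (2 * β))⁻¹ • y)
    have hnorm : ‖F β y‖ = |((Real.sqrt (2 * β)) ^ d)⁻¹| *
        dens β ((Real.sqrt (2 * β))⁻¹ • y) * |g y| := by
      rw [hF]
      dsimp only
      rw [Real.norm_eq_abs, abs_mul, abs_mul, abs_abs, abs_of_nonneg hdnn, mul_assoc]
    rw [hnorm]
    calc |((Real.sqrt (2 * β)) ^ d)⁻¹| * dens β ((Real.sqrt (2 * β))⁻¹ • y) * |g y|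
        ≤ ((L + 1) * Real.exp (-‖y‖ ^ 2 / 2)) * ‖g‖ :=
          mul_le_mul hA hgy (abs_nonneg _)
            (mul_nonneg (by linarith) (Real.exp_nonneg _))
      _ = ((L + 1) * ‖g‖) * Real.exp (-‖y‖ ^ 2 / 2) := by ring
  -- pointwise convergence
  have hlim : ∀ᵐ y : EuclideanSpace ℝ (Fin d) ∂volume, Tendsto (fun β : ℝ => F β y) atTop
      (nhds ((L * Real.exp (-‖y‖ ^ 2 / 2)) * g y)) := by
    refine Filter.Eventually.of_forall fun y => ?_
    have h1 := tendsto_one_add_div_rpow_exp (-‖y‖ ^ 2 / 2)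
    have h2 := (hκ.mul h1).mul (tendsto_const_nhds (x := g y))
    refine Tendsto.congr' ?_ h2
    filter_upwards [eventually_gt_atTop (0:ℝ), eventually_gt_atTop (‖y‖ ^ 2 / 2)]
      with β hβ hβ2
    have hc : 0 < Real.sqrt (2 * β) := Real.sqrt_pos.2 (by linarith)
    have hnlt : ‖(Real.sqrt (2 * β))⁻¹ • y‖ < 1 := by
      have hy : ‖y‖ < Real.sqrt (2 * β) := (Real.lt_sqrt (norm_nonneg y)).2 (by linarith)
      rw [norm_smul, Real.norm_eq_abs, abs_of_pos (inv_pos.2 hc)]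
      calc (Real.sqrt (2 * β))⁻¹ * ‖y‖ < (Real.sqrt (2 * β))⁻¹ * Real.sqrt (2 * β) :=
            mul_lt_mul_of_pos_left hy (inv_pos.2 hc)
        _ = 1 := inv_mul_cancel₀ hc.ne'
    have harg : (1 : ℝ) + -‖y‖ ^ 2 / 2 / β = 1 - ‖y‖ ^ 2 / (2 * β) := by
      field_simp
      ring
    rw [hF, hdens]
    dsimp only
    rw [if_pos hnlt, hsqnorm β hβ y, harg]
    ring
  -- conclusion via dominated convergence
  have hdct := MeasureTheory.tendsto_integral_filter_of_dominated_convergence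
    (μ := (volume : Measure (EuclideanSpace ℝ (Fin d)))) (F := F)
    (f := fun y : EuclideanSpace ℝ (Fin d) => (L * Real.exp (-‖y‖ ^ 2 / 2)) * g y)
    (fun y : EuclideanSpace ℝ (Fin d) => ((L + 1) * ‖g‖) * Real.exp (-‖y‖ ^ 2 / 2))
    hFmeas hbound hB_int hlim
  rw [hγint]
  exact Tendsto.congr' (hev.mono fun β h => h.symm) hdct
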